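/- The subword complexity of the Narayana word n satisfies ρ_n(m) = 2m + 1 for all m ≥ 0, i.e., n has exactly 2m+1 distinct factors of each length m. -/

import Mathlib

def nu : Fin 3 → List (Fin 3) := fun a => if a = 0 then [0, 1] else if a = 1 then [2] else [0]

def nuPow (k : ℕ) : List (Fin 3) := (fun w => w.flatMap nu)^[k] [0]

def nword (i : ℕ) : Fin 3 := (nuPow (i+2)).getD i 0

def IsFactor (x : List (Fin 3)) : Prop :=
  ∃ i, x = (List.range x.length).map (fun k => nword (i + k))

-- window
def W (i m : ℕ) : List (Fin 3) := (List.range m).map (fun k => nword (i + k))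

lemma nu_nonnil (a : Fin 3) : nu a ≠ [] := by
  fin_cases a <;> simp [nu]

lemma nuPow_succ (k : ℕ) : nuPow (k+1) = (nuPow k).flatMap nu := by
  simp [nuPow, Function.iterate_succ_apply']

lemma prefix_flatMap {u v : List (Fin 3)} (h : u <+: v) :
    u.flatMap nu <+: v.flatMap nu := by
  obtain ⟨t, rfl⟩ := h
  exact ⟨t.flatMap nu, by simp [List.flatMap_append]⟩

lemma nuPow_prefix (k : ℕ) : nuPow k <+: nuPow (k+1) := by
  induction k with
  | zero => exact ⟨[1], by simp [nuPow, nu]⟩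
  | succ k ih =>
      rw [nuPow_succ, nuPow_succ]
      exact prefix_flatMap ih

lemma nuPow_prefix_le {k k' : ℕ} (h : k ≤ k') : nuPow k <+: nuPow k' := by
  induction h with
  | refl => exact List.prefix_rfl
  | step h ih => exact ih.trans (nuPow_prefix _)

lemma nu_len_ge (a : Fin 3) : 1 ≤ (nu a).length := by
  fin_cases a <;> simp [nu]

lemma flatMap_len_ge (l : List (Fin 3)) : l.length ≤ (l.flatMap nu).length := by
  induction l with
  | nil => simp
  | cons a t ih =>
      simp only [List.flatMap_cons, List.length_append, List.length_cons]
      have := nu_len_ge a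
      omega

lemma flatMap_len_gt {l : List (Fin 3)} (h : (0:Fin 3) ∈ l) :
    l.length < (l.flatMap nu).length := by
  induction l with
  | nil => simp at h
  | cons a t ih =>
      simp only [List.flatMap_cons, List.length_append, List.length_cons]
      rcases List.mem_cons.mp h with rfl | h'
      · have h2 : (nu (0:Fin 3)).length = 2 := by simp [nu]
        have := flatMap_len_ge t
        omega
      · have := ih h'
        have := nu_len_ge a
        omega

lemma nuPow_len_lt (k : ℕ) : k < (nuPow k).length := by
  induction k with
  | zero => simp [nuPow]
  | succ k ih =>
      have h0 : (0 : Fin 3) ∈ nuPow k := by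
        have := (nuPow_prefix_le (Nat.zero_le k)).subset (l₁ := nuPow 0)
        exact this (by simp [nuPow])
      rw [nuPow_succ]
      have := flatMap_len_gt h0
      omega

lemma nword_eq_getElem {k i : ℕ} (h : i < (nuPow k).length) :
    nword i = (nuPow k)[i] := by
  rcases le_total k (i+2) with hk | hk
  · have hpre := nuPow_prefix_le hk
    have := hpre.getElem h
    rw [nword, List.getD_eq_getElem _ _ (lt_of_lt_of_le h hpre.length_le), this]
  · have hpre := nuPow_prefix_le hk
    have hi : i < (nuPow (i+2)).length := Nat.lt_of_lt_of_le (by omega) (Nat.le_of_lt (nuPow_len_lt (i+2)))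
    rw [nword, List.getD_eq_getElem _ _ hi, hpre.getElem hi]
-- window lemmas
lemma W_length (i m : ℕ) : (W i m).length = m := by simp [W]

lemma W_getElem (i m p : ℕ) (hp : p < m) : (W i m)[p]'(by simp [W_length, hp]) = nword (i+p) := by
  simp [W]

lemma W_append (i p q : ℕ) : W i (p+q) = W i p ++ W (i+p) q := by
  simp only [W, List.range_add, List.map_append, List.map_map]
  congr 1
  apply List.map_congr_left
  intro a _
  simp only [Function.comp_apply]
  congr 1
  omega

lemma W_cons (i m : ℕ) : W i (m+1) = nword i :: W (i+1) m := by
  have : W i (1 + m) = W i 1 ++ W (i+1) m := W_append i 1 m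
  rw [Nat.add_comm 1 m] at this
  rw [this]
  show List.map _ (List.range 1) ++ _ = _
  rw [show List.range 1 = [0] from rfl]
  simp [W]

lemma W_take (i m L : ℕ) (h : m ≤ L) : (W i L).take m = W i m := by
  apply List.ext_getElem
  · simp [W_length]; omega
  · intro n h1 h2
    rw [List.getElem_take]
    simp [W]

lemma W_eq_iff {i j m : ℕ} : W i m = W j m ↔ ∀ p < m, nword (i+p) = nword (j+p) := by
  constructor
  · intro h p hp
    have := congrArg (fun l => l.getD p 0) h
    simpa [W, List.getD_eq_getElem, hp] using this
  · intro h
    apply List.ext_getElem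
    · simp [W_length]
    · intro n h1 h2
      simp only [W, List.getElem_map, List.getElem_range]
      exact h n (by simpa [W_length] using h1)

lemma nuPow_eq_W (k : ℕ) : nuPow k = W 0 ((nuPow k).length) := by
  apply List.ext_getElem
  · simp [W_length]
  · intro n h1 h2
    simp only [W, List.getElem_map, List.getElem_range]
    rw [Nat.zero_add]
    exact (nword_eq_getElem h1).symm

-- block length
def blen (a : Fin 3) : ℕ := (nu a).length

-- sigma: position of j-th block
def sig : ℕ → ℕ
  | 0 => 0
  | j+1 => sig j + blen (nword j)

lemma blen_pos (a : Fin 3) : 1 ≤ blen a := nu_len_ge a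

lemma blen_le (a : Fin 3) : blen a ≤ 2 := by fin_cases a <;> simp [blen, nu]

lemma sig_le (j : ℕ) : j ≤ sig j := by
  induction j with
  | zero => simp [sig]
  | succ j ih => have := blen_pos (nword j); simp [sig]; omega

lemma sig_mono {i j : ℕ} (h : i < j) : sig i < sig j := by
  induction j with
  | zero => omega
  | succ j ih =>
      have := blen_pos (nword j)
      rcases Nat.lt_or_ge i j with h' | h'
      · have := ih h'; simp [sig]; omega
      · have : i = j := by omega
        subst this; simp [sig]; omega

lemma sig_flat_take (k j : ℕ) (h : j ≤ (nuPow k).length) :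
    (((nuPow k).take j).flatMap nu).length = sig j := by
  induction j with
  | zero => simp [sig]
  | succ j ih =>
      have hj : j < (nuPow k).length := by omega
      rw [List.take_succ, List.flatMap_append, List.length_append, ih (le_of_lt hj)]
      rw [List.getElem?_eq_getElem hj]
      simp [sig, blen, nword_eq_getElem hj]

-- the key block lemma
lemma BLKpt (j p : ℕ) (hp : p < blen (nword j)) :
    nword (sig j + p) = (nu (nword j)).getD p 0 := by
  set k := j + 2 with hk
  have hj : j < (nuPow k).length := by
    have := nuPow_len_lt k; omega
  have hnw : (nuPow k)[j] = nword j := (nword_eq_getElem hj).symm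
  have hdecomp : nuPow (k+1) =
      ((nuPow k).take j).flatMap nu ++ (nu (nword j) ++ ((nuPow k).drop (j+1)).flatMap nu) := by
    conv_lhs => rw [nuPow_succ]
    conv_lhs => rw [← List.take_append_drop j (nuPow k)]
    rw [List.flatMap_append]
    congr 1
    rw [List.drop_eq_getElem_cons hj, List.flatMap_cons, hnw]
  have hA : (((nuPow k).take j).flatMap nu).length = sig j := sig_flat_take k j (le_of_lt hj)
  have hplen : p < (nu (nword j)).length := hp
  have hlt : sig j + p < (nuPow (k+1)).length := by
    rw [hdecomp]
    simp only [List.length_append]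
    omega
  rw [nword_eq_getElem hlt]
  have : (nuPow (k+1))[sig j + p]'hlt =
      (nu (nword j) ++ ((nuPow k).drop (j+1)).flatMap nu)[sig j + p - (((nuPow k).take j).flatMap nu).length]'(by
        rw [hA]; simp only [List.length_append]; omega) := by
    rw [List.getElem_of_eq hdecomp hlt]
    rw [List.getElem_append_right (by omega)]
  rw [this]
  have hidx : sig j + p - (((nuPow k).take j).flatMap nu).length = p := by omega
  simp_rw [hidx]
  rw [List.getElem_append_left hplen]
  rw [List.getD_eq_getElem _ _ hplen]
-- letter maps
def fstL (a : Fin 3) : Fin 3 := if a = 1 then 2 else 0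
def lam (a : Fin 3) : Fin 3 := if a = 0 then 1 else if a = 1 then 2 else 0

lemma nword0 : nword 0 = 0 := by decide

lemma sig_succ (j : ℕ) : sig (j+1) = sig j + blen (nword j) := rfl

lemma nword_sig (j : ℕ) : nword (sig j) = fstL (nword j) := by
  have := BLKpt j 0 (blen_pos (nword j))
  rw [Nat.add_zero] at this
  rw [this]
  generalize nword j = a
  fin_cases a <;> simp [nu, fstL]

lemma nword_sig1 {j : ℕ} (h : nword j = 0) : nword (sig j + 1) = 1 := by
  have hb : blen (nword j) = 2 := by rw [h]; simp [blen, nu]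
  have := BLKpt j 1 (by omega)
  rw [this, h]
  simp [nu]

lemma sync (i : ℕ) : (∃ j, i = sig j) ∨ (∃ j, nword j = 0 ∧ i = sig j + 1) := by
  induction i with
  | zero => exact Or.inl ⟨0, rfl⟩
  | succ i ih =>
      rcases ih with ⟨j, rfl⟩ | ⟨j, hj, rfl⟩
      · by_cases h : nword j = 0
        · exact Or.inr ⟨j, h, rfl⟩
        · left
          refine ⟨j+1, ?_⟩
          have hb : blen (nword j) = 1 := by
            generalize hh : nword j = a at h
            fin_cases a <;> simp_all [blen, nu]
          rw [sig_succ, hb]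
      · left
        refine ⟨j+1, ?_⟩
        have hb : blen (nword j) = 2 := by rw [hj]; simp [blen, nu]
        rw [sig_succ, hb]

lemma one_desc {i : ℕ} (h : nword i = 1) : ∃ j, nword j = 0 ∧ i = sig j + 1 := by
  rcases sync i with ⟨j, rfl⟩ | hj
  · exfalso
    rw [nword_sig] at h
    generalize nword j = a at h
    fin_cases a <;> simp_all [fstL]
  · exact hj

lemma not_one_sig {i : ℕ} (h : nword i ≠ 1) : ∃ j, i = sig j := by
  rcases sync i with hj | ⟨j, hj, rfl⟩
  · exact hj
  · exact absurd (nword_sig1 hj) h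

lemma F1 {i : ℕ} (h : nword i = 1) : 1 ≤ i ∧ nword (i-1) = 0 := by
  obtain ⟨j, hj0, rfl⟩ := one_desc h
  refine ⟨by omega, ?_⟩
  simp only [Nat.add_sub_cancel]
  rw [nword_sig, hj0]
  rfl

lemma sig_pos_inv {i j : ℕ} (hi : 1 ≤ i) (h : i = sig j) : 1 ≤ j := by
  rcases Nat.eq_zero_or_pos j with rfl | h'
  · simp [sig] at h; omega
  · exact h'

lemma F2 {i : ℕ} (h : nword i = 2) : 1 ≤ i ∧ nword (i-1) = 1 := by
  obtain ⟨j, rfl⟩ := not_one_sig (by rw [h]; decide)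
  rw [nword_sig] at h
  have hj1 : nword j = 1 := by
    generalize hh : nword j = a at h
    fin_cases a <;> simp_all [fstL]
  obtain ⟨hj, hj0⟩ := F1 hj1
  obtain ⟨j', rfl⟩ : ∃ j', j = j' + 1 := ⟨j - 1, by omega⟩
  simp only [Nat.add_sub_cancel] at hj0
  have hb : blen (nword j') = 2 := by rw [hj0]; simp [blen, nu]
  rw [sig_succ, hb]
  constructor
  · have := sig_le j'; omega
  · have h2 : sig j' + 2 - 1 = sig j' + 1 := by omega
    rw [h2, nword_sig1 hj0]

lemma sig_le_mono {i j : ℕ} (h : i ≤ j) : sig i ≤ sig j := by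
  rcases Nat.lt_or_ge i j with h' | h'
  · exact le_of_lt (sig_mono h')
  · have : i = j := by omega
    rw [this]

lemma last_letter {i : ℕ} (hi : 1 ≤ i) : nword (sig i - 1) = lam (nword (i-1)) := by
  obtain ⟨i', rfl⟩ : ∃ i', i = i' + 1 := ⟨i - 1, by omega⟩
  simp only [Nat.add_sub_cancel]
  rw [sig_succ]
  have hb := blen_pos (nword i')
  have := BLKpt i' (blen (nword i') - 1) (by omega)
  have heq : sig i' + blen (nword i') - 1 = sig i' + (blen (nword i') - 1) := by omega
  rw [heq, this]
  generalize nword i' = a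
  fin_cases a <;> simp [blen, nu, lam]

lemma lam_inj : Function.Injective lam := by decide

lemma W_one (x : ℕ) : W x 1 = [nword x] := by
  rw [show (1:ℕ) = 0 + 1 from rfl, W_cons]
  simp [W]

lemma W_block (j : ℕ) : W (sig j) (blen (nword j)) = nu (nword j) := by
  apply List.ext_getElem
  · simp [W_length, blen]
  · intro n h1 h2
    rw [W_getElem _ _ _ (by simpa [W_length] using h1)]
    rw [BLKpt j n (by simpa [W_length] using h1)]
    rw [List.getD_eq_getElem _ _ h2]

lemma Expand (s i : ℕ) : W (sig i) (sig (i+s) - sig i) = (W i s).flatMap nu := by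
  induction s with
  | zero => simp [W]
  | succ s ih =>
      have h1 : W i (s+1) = W i s ++ [nword (i+s)] := by
        rw [W_append i s 1, W_one]
      rw [h1, List.flatMap_append, ← ih]
      have hle1 : sig i ≤ sig (i+s) := sig_le_mono (by omega)
      have hle2 : sig (i+s) ≤ sig (i+s+1) := sig_le_mono (by omega)
      have h2 : sig (i+(s+1)) - sig i = (sig (i+s) - sig i) + blen (nword (i+s)) := by
        have : sig (i + (s+1)) = sig (i+s) + blen (nword (i+s)) := by
          rw [show i + (s+1) = (i+s)+1 by omega, sig_succ]
        omega
      rw [h2, W_append]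
      congr 1
      · have : sig i + (sig (i+s) - sig i) = sig (i+s) := by omega
        rw [this, W_block]
        simp [List.flatMap_cons]
lemma fstL_ne_one (a : Fin 3) : fstL a ≠ 1 := by fin_cases a <;> simp [fstL]

lemma zero_iff (p : ℕ) : nword p = 0 ↔ nword (sig p + 1) = 1 := by
  constructor
  · exact nword_sig1
  · intro h
    by_contra h0
    have hb : blen (nword p) = 1 := by
      generalize hh : nword p = a at h0
      fin_cases a <;> simp_all [blen, nu]
    have : sig p + 1 = sig (p+1) := by rw [sig_succ, hb]
    rw [this, nword_sig] at h
    exact fstL_ne_one _ h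

lemma one_iff (p : ℕ) : nword p = 1 ↔ nword (sig p) = 2 := by
  rw [nword_sig]
  generalize nword p = a
  fin_cases a <;> simp [fstL]

lemma fin3_det {a b : Fin 3} (ha : a ≠ 1) (hb : b ≠ 1) (h : a = 0 ↔ b = 0) : a = b := by
  fin_cases a <;> fin_cases b <;> simp_all

lemma letter_det {m i' j' p r q : ℕ} (h : W (sig i') m = W (sig j') m)
    (hp : sig i' + q = sig p) (hr : sig j' + q = sig r) (hq : q + 1 < m) :
    nword r = nword p := by
  have e0 : nword (sig i' + q) = nword (sig j' + q) := W_eq_iff.mp h q (by omega)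
  have e1 : nword (sig i' + (q+1)) = nword (sig j' + (q+1)) := W_eq_iff.mp h (q+1) hq
  rw [hp, hr] at e0
  by_cases h1 : nword p = 1
  · have : nword (sig p) = 2 := (one_iff p).mp h1
    rw [h1]
    exact (one_iff r).mpr (by rw [← e0, this])
  · have hr1 : nword r ≠ 1 := by
      intro hc
      have : nword (sig r) = 2 := (one_iff r).mp hc
      exact h1 ((one_iff p).mpr (by rw [e0, this]))
    apply fin3_det hr1 h1
    rw [zero_iff r, zero_iff p]
    rw [← hp, ← hr] at *
    constructor
    · intro hh; rw [show sig i' + q + 1 = sig i' + (q+1) by omega, e1]; exact hh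
    · intro hh; rw [show sig j' + q + 1 = sig j' + (q+1) by omega, ← e1]; exact hh

lemma DET {m i' j' : ℕ} (h : W (sig i') m = W (sig j') m) (t : ℕ) :
    (sig (i'+t) - sig i' < m → sig (j'+t) - sig j' = sig (i'+t) - sig i')
    ∧ (sig (i'+t) - sig i' + 1 < m → nword (j'+t) = nword (i'+t)) := by
  induction t with
  | zero =>
      constructor
      · intro _; simp
      · intro hm
        exact letter_det (p := i'+0) (r := j'+0) (q := 0) h (by simp) (by simp)
          (by simpa using hm)
  | succ t ih =>
      have hlei : sig i' ≤ sig (i'+t) := sig_le_mono (by omega)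
      have hlej : sig j' ≤ sig (j'+t) := sig_le_mono (by omega)
      have hsi : sig (i'+(t+1)) = sig (i'+t) + blen (nword (i'+t)) := by
        rw [show i'+(t+1) = (i'+t)+1 by omega, sig_succ]
      have hsj : sig (j'+(t+1)) = sig (j'+t) + blen (nword (j'+t)) := by
        rw [show j'+(t+1) = (j'+t)+1 by omega, sig_succ]
      have hbi := blen_pos (nword (i'+t))
      have part1 : sig (i'+(t+1)) - sig i' < m → sig (j'+(t+1)) - sig j' = sig (i'+(t+1)) - sig i' := by
        intro hm
        have hqt : sig (i'+t) - sig i' + 1 < m := by omega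
        have hsync := ih.1 (by omega)
        have hlet := ih.2 hqt
        rw [hsi, hsj, hlet]
        omega
      refine ⟨part1, ?_⟩
      intro hm
      have hq1 := part1 (by omega)
      exact letter_det (p := i'+(t+1)) (r := j'+(t+1)) (q := sig (i'+(t+1)) - sig i') h
        (by have := sig_le_mono (show i' ≤ i'+(t+1) by omega); omega)
        (by have := sig_le_mono (show j' ≤ j'+(t+1) by omega); omega) hm
lemma fin3_cases0 {a : Fin 3} (h1 : a ≠ 1) (h2 : a ≠ 2) : a = 0 := by
  fin_cases a <;> simp_all

lemma nu_take1 {a : Fin 3} (h : a ≠ 1) : (nu a).take 1 = [0] := by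
  fin_cases a <;> simp_all [nu]

lemma Expand0 (s : ℕ) : W 0 (sig s) = (W 0 s).flatMap nu := by
  have h := Expand s 0
  rw [Nat.zero_add] at h
  rw [show sig 0 = 0 from rfl] at h
  rw [Nat.sub_zero] at h
  exact h

lemma flatMapW_len (x s : ℕ) : ((W x s).flatMap nu).length = sig (x+s) - sig x := by
  have := congrArg List.length (Expand s x)
  simpa [W_length] using this.symm

lemma W_snoc (x s : ℕ) : W x (s+1) = W x s ++ [nword (x+s)] := by
  rw [W_append x s 1, W_one]

lemma conclA {s' m : ℕ} (hm : m = sig s') : W 0 m = (W 0 s').flatMap nu := by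
  rw [hm, Expand0]

lemma conclB {s' m : ℕ} (hns : nword s' ≠ 1) (hm : m = sig s' + 1) :
    W 0 m = (W 0 s').flatMap nu ++ [0] := by
  have hb := blen_pos (nword s')
  have h1 : m ≤ sig (s'+1) := by rw [sig_succ]; omega
  have h2 : W 0 m = (W 0 (sig (s'+1))).take m := (W_take 0 m _ h1).symm
  have hlen : ((W 0 s').flatMap nu).length = sig s' := by
    have := flatMapW_len 0 s'
    simpa [sig] using this
  rw [h2, Expand0, W_snoc, List.flatMap_append]
  rw [List.take_append]
  rw [List.take_of_length_le (by omega)]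
  congr 1
  rw [hlen, show m - sig s' = 1 by omega]
  simp only [Nat.zero_add, List.flatMap_cons, List.flatMap_nil, List.append_nil]
  exact nu_take1 hns

lemma sig_ge_add (x s : ℕ) : sig x + s ≤ sig (x + s) := by
  induction s with
  | zero => simp
  | succ s ih =>
      have := blen_pos (nword (x+s))
      rw [show x + (s+1) = (x+s)+1 by omega, sig_succ]
      omega
lemma fin3_two {a b : Fin 3} (ha : a ≠ 1) (hb : b ≠ 1) (hab : a ≠ b) :
    a = 2 ∨ b = 2 := by
  fin_cases a <;> fin_cases b <;> simp_all

lemma left_special : ∀ m i j, 1 ≤ i → 1 ≤ j → W i m = W j m →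
    nword (i-1) ≠ nword (j-1) → W i m = W 0 m := by
  intro m
  induction m using Nat.strong_induction_on with
  | _ m IH =>
  intro i j hi hj hW hne
  rcases Nat.eq_zero_or_pos m with rfl | hm1
  · simp [W]
  have h0 : nword i = nword j := by
    have := W_eq_iff.mp hW 0 hm1
    simpa using this
  by_cases hc1 : nword i = 1
  · exact absurd ((F1 hc1).2.trans ((F1 (h0 ▸ hc1)).2).symm) hne
  by_cases hc2 : nword i = 2
  · exact absurd ((F2 hc2).2.trans ((F2 (h0 ▸ hc2)).2).symm) hne
  have hc0 : nword i = 0 := fin3_cases0 hc1 hc2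
  by_cases hm2' : m = 1
  · subst hm2'
    rw [W_one, W_one, hc0, nword0]
  have hm2 : 2 ≤ m := by omega
  obtain ⟨i', hi'⟩ := not_one_sig hc1
  obtain ⟨j', hj'⟩ := not_one_sig (show nword j ≠ 1 by rw [← h0]; exact hc1)
  have hi'1 : 1 ≤ i' := sig_pos_inv hi hi'
  have hj'1 : 1 ≤ j' := sig_pos_inv hj hj'
  have hlami : nword (i-1) = lam (nword (i'-1)) := by rw [hi']; exact last_letter hi'1
  have hlamj : nword (j-1) = lam (nword (j'-1)) := by rw [hj']; exact last_letter hj'1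
  have hne' : nword (i'-1) ≠ nword (j'-1) := by
    intro hcc
    exact hne (by rw [hlami, hlamj, hcc])
  have hWs : W (sig i') m = W (sig j') m := by rw [← hi', ← hj']; exact hW
  -- find minimal s with m ≤ q(s)+1
  have hex : ∃ s, m ≤ sig (i'+s) - sig i' + 1 := by
    refine ⟨m, ?_⟩
    have := sig_ge_add i' m
    omega
  have hfind : m ≤ sig (i' + Nat.find hex) - sig i' + 1 := Nat.find_spec hex
  have hmin : ∀ t < Nat.find hex, sig (i'+t) - sig i' + 1 < m := by
    intro t ht
    have := Nat.find_min hex ht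
    omega
  have hs₀1 : 1 ≤ Nat.find hex := by
    rcases Nat.eq_zero_or_pos (Nat.find hex) with h | h
    · exfalso
      rw [h] at hfind
      have : sig (i'+0) - sig i' = 0 := by simp
      omega
    · exact h
  obtain ⟨t₀, ht₀⟩ : ∃ t₀, Nat.find hex = t₀ + 1 := ⟨Nat.find hex - 1, by omega⟩
  rw [ht₀] at hfind hmin
  have hWsync : W i' (t₀+1) = W j' (t₀+1) := by
    apply W_eq_iff.mpr
    intro t ht
    exact ((DET hWs t).2 (hmin t ht)).symm
  have hqt : sig (i'+t₀) - sig i' + 1 < m := hmin t₀ (by omega)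
  have hq1 := (DET hWs t₀).1 (by omega)
  have hlet := (DET hWs t₀).2 hqt
  have hsi : sig (i'+(t₀+1)) = sig (i'+t₀) + blen (nword (i'+t₀)) := by
    rw [show i'+(t₀+1) = (i'+t₀)+1 by omega, sig_succ]
  have hsj : sig (j'+(t₀+1)) = sig (j'+t₀) + blen (nword (j'+t₀)) := by
    rw [show j'+(t₀+1) = (j'+t₀)+1 by omega, sig_succ]
  have hlei : sig i' ≤ sig (i'+t₀) := sig_le_mono (by omega)
  have hlej : sig j' ≤ sig (j'+t₀) := sig_le_mono (by omega)
  have hlei1 : sig i' ≤ sig (i'+(t₀+1)) := sig_le_mono (by omega)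
  have hlej1 : sig j' ≤ sig (j'+(t₀+1)) := sig_le_mono (by omega)
  have hqj : sig (j'+(t₀+1)) - sig j' = sig (i'+(t₀+1)) - sig i' := by
    rw [hsi, hsj, hlet]
    omega
  have hble := blen_le (nword (i'+t₀))
  have hqm : sig (i'+(t₀+1)) - sig i' ≤ m := by omega
  have EI : W (sig i') (sig (i'+(t₀+1)) - sig i') = (W i' (t₀+1)).flatMap nu :=
    Expand (t₀+1) i'
  have EJ : W (sig j') (sig (i'+(t₀+1)) - sig i') = (W j' (t₀+1)).flatMap nu := by
    rw [← hqj]; exact Expand (t₀+1) j'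
  have hAB : (∃ s', 1 ≤ s' ∧ W i' s' = W j' s' ∧
        W i m = (W i' s').flatMap nu ∧ W j m = (W j' s').flatMap nu)
      ∨ (∃ s', 1 ≤ s' ∧ W i' s' = W j' s' ∧ nword (i'+s') ≠ 1 ∧ nword (j'+s') ≠ 1 ∧
        W i m = (W i' s').flatMap nu ++ [0] ∧ W j m = (W j' s').flatMap nu ++ [0]) := by
    rcases eq_or_lt_of_le hqm with hq | hq
    · left
      refine ⟨t₀+1, by omega, hWsync, ?_, ?_⟩
      · rw [hi', ← EI, hq]
      · rw [hj', ← EJ, hq]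
    · have hqeq : sig (i'+(t₀+1)) - sig i' + 1 = m := by omega
      have hWiq : W i m = (W i' (t₀+1)).flatMap nu ++ [nword (sig (i'+(t₀+1)))] := by
        rw [hi', ← hqeq, W_snoc, EI,
          show sig i' + (sig (i'+(t₀+1)) - sig i') = sig (i'+(t₀+1)) by omega]
      have hWjq : W j m = (W j' (t₀+1)).flatMap nu ++ [nword (sig (j'+(t₀+1)))] := by
        rw [hj', ← hqeq, W_snoc, EJ,
          show sig j' + (sig (i'+(t₀+1)) - sig i') = sig (j'+(t₀+1)) by omega]
      have hcd : nword (sig (i'+(t₀+1))) = nword (sig (j'+(t₀+1))) := by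
        have := W_eq_iff.mp hWs (sig (i'+(t₀+1)) - sig i') (by omega)
        rw [show sig i' + (sig (i'+(t₀+1)) - sig i') = sig (i'+(t₀+1)) by omega,
          show sig j' + (sig (i'+(t₀+1)) - sig i') = sig (j'+(t₀+1)) by omega] at this
        exact this
      have hcne1 : nword (sig (i'+(t₀+1))) ≠ 1 := by
        rw [nword_sig]; exact fstL_ne_one _
      by_cases hcc2 : nword (sig (i'+(t₀+1))) = 2
      · have hii : nword (i'+(t₀+1)) = 1 := (one_iff _).mpr hcc2
        have hjj : nword (j'+(t₀+1)) = 1 := (one_iff _).mpr (by rw [← hcd]; exact hcc2)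
        left
        refine ⟨t₀+2, by omega, ?_, ?_, ?_⟩
        · rw [show t₀+2 = (t₀+1)+1 from rfl, W_snoc i' (t₀+1), W_snoc j' (t₀+1), hWsync, hii, hjj]
        · rw [hWiq, show t₀+2 = (t₀+1)+1 from rfl, W_snoc i' (t₀+1), List.flatMap_append, hii, hcc2]
          simp [nu]
        · rw [hWjq, show t₀+2 = (t₀+1)+1 from rfl, W_snoc j' (t₀+1), List.flatMap_append, hjj, ← hcd, hcc2]
          simp [nu]
      · have hcc0 : nword (sig (i'+(t₀+1))) = 0 := fin3_cases0 hcne1 hcc2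
        right
        refine ⟨t₀+1, by omega, hWsync, ?_, ?_, ?_, ?_⟩
        · intro h1
          exact hcc2 ((one_iff _).mp h1)
        · intro h1
          exact hcc2 (by rw [hcd]; exact (one_iff _).mp h1)
        · rw [hWiq, hcc0]
        · rw [hWjq, ← hcd, hcc0]
  clear hfind hmin hqt hq1 hlet hsi hsj hqj hqm EI EJ hWsync hble hlei hlej hlei1 hlej1 ht₀
  -- common first-letter analysis
  have firstletter : ∀ s', 1 ≤ s' → W i' s' = W j' s' → nword i' = 0 ∨ W i m = W 0 m := by
    intro s' hs'1 hsync
    have hfi : nword i' ≠ 1 := by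
      intro h
      have h2 := (one_iff i').mp h
      rw [← hi'] at h2
      exact hc2 h2
    by_cases hfi2 : nword i' = 2
    · have hj0 : nword j' = nword i' := by
        have := W_eq_iff.mp hsync 0 hs'1
        simpa using this.symm
      exfalso
      exact hne' ((F2 hfi2).2.trans ((F2 (hj0.trans hfi2)).2).symm)
    · exact Or.inl (fin3_cases0 hfi hfi2)
  rcases hAB with ⟨s', hs'1, hsync, hWi, hWj⟩ | ⟨s', hs'1, hsync, hai, haj, hWi, hWj⟩
  · -- case A
    rcases firstletter s' hs'1 hsync with hfi0 | hdone
    swap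
    · exact hdone
    have hmem : (0:Fin 3) ∈ W i' s' := by
      obtain ⟨s'', rfl⟩ : ∃ s'', s' = s''+1 := ⟨s'-1, by omega⟩
      rw [W_cons, hfi0]
      exact List.mem_cons_self
    have hlenA : m = ((W i' s').flatMap nu).length := by
      have := congrArg List.length hWi
      simpa [W_length] using this
    have hs'm : s' < m := by
      have h1 := flatMap_len_gt hmem
      rw [W_length] at h1
      omega
    have hIH := IH s' hs'm i' j' hi'1 hj'1 hsync hne'
    have hWi0 : W i m = (W 0 s').flatMap nu := by rw [hWi, hIH]
    have hm_eq : m = sig s' := by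
      rw [hIH] at hlenA
      have := flatMapW_len 0 s'
      rw [this] at hlenA
      simpa [sig] using hlenA
    rw [hWi0, conclA hm_eq]
  · -- case B
    rcases firstletter s' hs'1 hsync with hfi0 | hdone
    swap
    · exact hdone
    have hmem : (0:Fin 3) ∈ W i' s' := by
      obtain ⟨s'', rfl⟩ : ∃ s'', s' = s''+1 := ⟨s'-1, by omega⟩
      rw [W_cons, hfi0]
      exact List.mem_cons_self
    have hlenB : m = ((W i' s').flatMap nu).length + 1 := by
      have := congrArg List.length hWi
      simpa [W_length] using this
    have hflatgt := flatMap_len_gt hmem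
    rw [W_length] at hflatgt
    by_cases hab : nword (i'+s') = nword (j'+s')
    · -- B1 : extend by the common letter
      have hs1m : s' + 1 < m := by omega
      have hsync1 : W i' (s'+1) = W j' (s'+1) := by
        rw [W_snoc, W_snoc, hsync, hab]
      have hIH1 := IH (s'+1) hs1m i' j' hi'1 hj'1 hsync1 hne'
      have hIH : W i' s' = W 0 s' := by
        have h3 := congrArg (List.take s') hIH1
        rw [W_take _ _ _ (by omega), W_take _ _ _ (by omega)] at h3
        exact h3
      have hns' : nword s' ≠ 1 := by
        have h4 := W_eq_iff.mp hIH1 s' (by omega)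
        rw [Nat.zero_add] at h4
        rw [← h4]
        exact hai
      have hWi0 : W i m = (W 0 s').flatMap nu ++ [0] := by rw [hWi, hIH]
      have hm_eq : m = sig s' + 1 := by
        rw [hIH] at hlenB
        have h5 := flatMapW_len 0 s'
        rw [h5] at hlenB
        simpa [sig] using hlenB
      rw [hWi0, conclB hns' hm_eq]
    · -- B2 : differing next letters
      have hs'm : s' < m := by omega
      have hIH := IH s' hs'm i' j' hi'1 hj'1 hsync hne'
      have hm_eq : m = sig s' + 1 := by
        rw [hIH] at hlenB
        have h5 := flatMapW_len 0 s'
        rw [h5] at hlenB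
        simpa [sig] using hlenB
      have hns' : nword s' ≠ 1 := by
        intro hns
        have hF1 := (F1 hns).2
        have hlast : nword (i'+(s'-1)) = nword (s'-1) := by
          have h4 := W_eq_iff.mp hIH (s'-1) (by omega)
          rw [Nat.zero_add] at h4
          exact h4
        have hlast2 : nword (j'+(s'-1)) = nword (s'-1) := by
          have h4 := W_eq_iff.mp hsync (s'-1) (by omega)
          rw [← h4]
          exact hlast
        rcases fin3_two hai haj hab with h2 | h2
        · have h6 := (F2 h2).2
          rw [show i'+s'-1 = i'+(s'-1) by omega, hlast, hF1] at h6
          exact absurd h6 (by decide)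
        · have h6 := (F2 h2).2
          rw [show j'+s'-1 = j'+(s'-1) by omega, hlast2, hF1] at h6
          exact absurd h6 (by decide)
      have hWi0 : W i m = (W 0 s').flatMap nu ++ [0] := by rw [hWi, hIH]
      rw [hWi0, conclB hns' hm_eq]
lemma exists_occ : ∀ k b, ∃ i, 1 ≤ i ∧ nword (i-1) = lam^[k] b ∧
    W i ((nuPow k).length) = nuPow k := by
  intro k
  induction k with
  | zero =>
      intro b
      have hlen : (nuPow 0).length = 1 := rfl
      fin_cases b
      · exact ⟨4, by omega, by decide, by rw [hlen, W_one]; decide⟩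
      · exact ⟨6, by omega, by decide, by rw [hlen, W_one]; decide⟩
      · exact ⟨3, by omega, by decide, by rw [hlen, W_one]; decide⟩
  | succ k ih =>
      intro b
      obtain ⟨i, hi1, hpre, hocc⟩ := ih b
      refine ⟨sig i, ?_, ?_, ?_⟩
      · have := sig_le i; omega
      · rw [last_letter hi1, hpre, ← Function.iterate_succ_apply' lam k b]
      · have hE := Expand ((nuPow k).length) i
        rw [hocc, ← nuPow_succ] at hE
        have hL : sig (i + (nuPow k).length) - sig i = (nuPow (k+1)).length := by
          have := congrArg List.length hE
          simpa [W_length] using this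
        rw [← hL]
        exact hE

lemma lam_surj_iter : ∀ (k : ℕ) (c : Fin 3), ∃ b, lam^[k] b = c := by
  intro k
  induction k with
  | zero => exact fun c => ⟨c, rfl⟩
  | succ k ih =>
      intro c
      have hsurj : ∀ c : Fin 3, ∃ a, lam a = c := by decide
      obtain ⟨a, ha⟩ := hsurj c
      obtain ⟨b, hb⟩ := ih a
      exact ⟨b, by rw [Function.iterate_succ_apply' lam k b, hb, ha]⟩

lemma prefix_occ (m : ℕ) (c : Fin 3) : ∃ i, 1 ≤ i ∧ nword (i-1) = c ∧ W i m = W 0 m := by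
  obtain ⟨b, hb⟩ := lam_surj_iter m c
  obtain ⟨i, hi1, hpre, hocc⟩ := exists_occ m b
  have hm : m ≤ (nuPow m).length := le_of_lt (nuPow_len_lt m)
  refine ⟨i, hi1, by rw [hpre, hb], ?_⟩
  have h1 : (W i ((nuPow m).length)).take m = W i m := W_take _ _ _ hm
  have h2 : (W 0 ((nuPow m).length)).take m = W 0 m := W_take _ _ _ hm
  rw [← h1, ← h2, hocc, ← nuPow_eq_W]
def Fct (m : ℕ) : Set (List (Fin 3)) := {x | ∃ i, x = W i m}

lemma S_eq (m : ℕ) : {x : List (Fin 3) | x.length = m ∧ IsFactor x} = Fct m := by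
  ext x
  constructor
  · rintro ⟨hlen, i, hx⟩
    exact ⟨i, by rw [hx, hlen]; rfl⟩
  · rintro ⟨i, rfl⟩
    refine ⟨W_length i m, ⟨i, ?_⟩⟩
    rw [W_length]
    rfl

lemma Fct_finite (m : ℕ) : (Fct m).Finite := by
  apply Set.Finite.subset (List.finite_length_eq (Fin 3) m)
  rintro x ⟨i, rfl⟩
  exact W_length i m

lemma occ_pos {m : ℕ} {u : List (Fin 3)} (hu : u ∈ Fct m) :
    {i | 1 ≤ i ∧ u = W i m}.Nonempty := by
  obtain ⟨i, rfl⟩ := hu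
  rcases Nat.eq_zero_or_pos i with rfl | hi
  · obtain ⟨i', hi'1, _, hW⟩ := prefix_occ m 0
    exact ⟨i', hi'1, hW.symm⟩
  · exact ⟨i, hi, rfl⟩

noncomputable def pos (m : ℕ) (u : List (Fin 3)) : ℕ := sInf {i | 1 ≤ i ∧ u = W i m}

noncomputable def E (m : ℕ) (u : List (Fin 3)) : List (Fin 3) := nword (pos m u - 1) :: u

lemma E_mem {m : ℕ} {u : List (Fin 3)} (hu : u ∈ Fct m) : E m u ∈ Fct (m+1) := by
  obtain ⟨h1, h2⟩ := Nat.sInf_mem (occ_pos hu)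
  have hp1 : 1 ≤ pos m u := h1
  have hp2 : u = W (pos m u) m := h2
  refine ⟨pos m u - 1, ?_⟩
  rw [E, W_cons, show pos m u - 1 + 1 = pos m u by omega, ← hp2]

lemma ext_unique {m : ℕ} {u : List (Fin 3)} (hu : u ≠ W 0 m) {c c' : Fin 3}
    (hc : (c :: u) ∈ Fct (m+1)) (hc' : (c' :: u) ∈ Fct (m+1)) : c = c' := by
  obtain ⟨i, hi⟩ := hc
  obtain ⟨j, hj⟩ := hc'
  rw [W_cons] at hi hj
  obtain ⟨hci, hui⟩ := List.cons_eq_cons.mp hi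
  obtain ⟨hcj, huj⟩ := List.cons_eq_cons.mp hj
  by_contra hne
  apply hu
  have := left_special m (i+1) (j+1) (by omega) (by omega) (by rw [← hui, ← huj])
    (by simpa [hci, hcj] using hne)
  rw [hui, this]

lemma step (m : ℕ) : Fct (m+1) =
    (E m) '' (Fct m \ {W 0 m}) ∪ (fun c : Fin 3 => c :: W 0 m) '' Set.univ := by
  ext x
  constructor
  · rintro ⟨i, rfl⟩
    rw [W_cons]
    by_cases hu : W (i+1) m = W 0 m
    · right
      exact ⟨nword i, Set.mem_univ _, by rw [hu]⟩
    · left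
      refine ⟨W (i+1) m, ⟨⟨i+1, rfl⟩, hu⟩, ?_⟩
      have h1 : E m (W (i+1) m) ∈ Fct (m+1) := E_mem ⟨i+1, rfl⟩
      have h2 : (nword i :: W (i+1) m) ∈ Fct (m+1) := ⟨i, (W_cons i m).symm⟩
      have : nword (pos m (W (i+1) m) - 1) = nword i := ext_unique hu h1 h2
      rw [E] at *
      rw [this]
  · rintro (⟨u, ⟨hu, hne⟩, rfl⟩ | ⟨c, _, rfl⟩)
    · exact E_mem hu
    · obtain ⟨i, hi1, hc, hW⟩ := prefix_occ m c
      refine ⟨i-1, ?_⟩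
      rw [W_cons, show i-1+1 = i by omega, hW, hc]

lemma card_step (m : ℕ) : (Fct (m+1)).ncard = (Fct m).ncard + 2 := by
  rw [step m]
  have hfin0 := Fct_finite m
  have hfin1 : ((E m) '' (Fct m \ {W 0 m})).Finite := hfin0.diff.image _
  have hfin2 : ((fun c : Fin 3 => c :: W 0 m) '' Set.univ).Finite :=
    Set.finite_univ.image _
  have hdisj : Disjoint ((E m) '' (Fct m \ {W 0 m}))
      ((fun c : Fin 3 => c :: W 0 m) '' Set.univ) := by
    rw [Set.disjoint_left]
    rintro x ⟨u, ⟨_, hne⟩, rfl⟩ ⟨c, _, hc⟩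
    have := (List.cons_eq_cons.mp hc.symm).2
    exact hne (Set.mem_singleton_iff.mpr this)
  rw [Set.ncard_union_eq hdisj hfin1 hfin2]
  have hinj : Set.InjOn (E m) (Fct m \ {W 0 m}) := by
    intro a _ b _ hab
    exact (List.cons_eq_cons.mp hab).2
  rw [Set.ncard_image_of_injOn hinj]
  have hmem0 : W 0 m ∈ Fct m := ⟨0, rfl⟩
  rw [Set.ncard_diff_singleton_of_mem hmem0]
  have hinj2 : Function.Injective (fun c : Fin 3 => c :: W 0 m) := by
    intro a b hab
    exact (List.cons_eq_cons.mp hab).1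
  rw [Set.ncard_image_of_injective _ hinj2, Set.ncard_univ]
  have h3 : Nat.card (Fin 3) = 3 := by simp
  have hpos : 1 ≤ (Fct m).ncard := (Set.ncard_pos hfin0).mpr ⟨W 0 m, hmem0⟩
  omega

lemma card_base : (Fct 0).ncard = 1 := by
  have : Fct 0 = {([] : List (Fin 3))} := by
    ext x
    constructor
    · rintro ⟨i, rfl⟩
      simp [W]
    · rintro rfl
      exact ⟨0, by simp [W]⟩
  rw [this, Set.ncard_singleton]

theorem narayana_subword_complexity (m : ℕ) :
    {x : List (Fin 3) | x.length = m ∧ IsFactor x}.ncard = 2 * m + 1 := by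
  rw [S_eq]
  induction m with
  | zero => exact card_base
  | succ m ih =>
      rw [card_step, ih]
      ring
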